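/- Let k ≥ 1 be a natural number, set q = 2k, and let f(ξ) = Σ_{i=0}^{2k+1} a_i ξ^i be a real polynomial with a_{2k+1} < 0. Then there exists a constant K₃ > 0 such that for every τ with 0 < τ ≤ 1 and every ξ ∈ ℝ, (1 − τ·ξ^{2q})·f'(ξ) + 2q·τ·ξ^{2q−1}·f(ξ) ≤ K₃·(1 + τ·ξ^{2q})^{3/2}, where f' is the derivative of f. -/
import Mathlib

open Polynomial Filter Finset

lemma eval_bddAbove (P : Polynomial ℝ) (h0 : P.natDegree ≠ 0) (he : Even P.natDegree)
    (hl : P.leadingCoeff < 0) : ∃ M : ℝ, ∀ x : ℝ, P.eval x ≤ M := by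
  have hP : P ≠ 0 := fun h => by simp [h] at hl
  have hdeg : 0 < P.degree := by
    rw [← Polynomial.natDegree_pos_iff_degree_pos]
    omega
  have htop : Tendsto (fun x => P.eval x) atTop atBot :=
    Polynomial.tendsto_atBot_of_leadingCoeff_nonpos P hdeg hl.le
  set Q : Polynomial ℝ := P.comp (-X) with hQ
  have hQdeg : Q.natDegree = P.natDegree := by
    simp [hQ, natDegree_comp]
  have hQlead : Q.leadingCoeff = P.leadingCoeff := by
    rw [hQ, leadingCoeff_comp (by simp)]
    simp [he.neg_one_pow]
  have hQtop : Tendsto (fun x => Q.eval x) atTop atBot :=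
    Polynomial.tendsto_atBot_of_leadingCoeff_nonpos Q
      (by rw [← natDegree_pos_iff_degree_pos]; omega) (by rw [hQlead]; exact hl.le)
  have hbot : Tendsto (fun x => P.eval x) atBot atBot := by
    have := hQtop.comp tendsto_neg_atBot_atTop
    convert this using 1
    funext x
    simp [hQ, eval_comp]
  have hco : Tendsto (fun x => P.eval x) (cocompact ℝ) atBot := by
    rw [cocompact_eq_atBot_atTop, tendsto_sup]
    exact ⟨hbot, htop⟩
  obtain ⟨x₀, hx₀⟩ := (Polynomial.continuous P).exists_forall_ge hco
  exact ⟨P.eval x₀, hx₀⟩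

theorem odd_polynomial_tamed_derivative_condition
    (k : ℕ) (hk : 1 ≤ k) (a : ℕ → ℝ) (hlead : a (2 * k + 1) < 0)
    (f : ℝ → ℝ) (hf : f = fun ξ : ℝ => ∑ i ∈ Finset.range (2 * k + 2), a i * ξ ^ i) :
    ∃ K3 : ℝ, 0 < K3 ∧
      ∀ τ : ℝ, 0 < τ → τ ≤ 1 → ∀ ξ : ℝ,
        (1 - τ * ξ ^ (4 * k)) * deriv f ξ +
            2 * (2 * k : ℝ) * τ * ξ ^ (4 * k - 1) * f ξ ≤
          K3 * (1 + τ * ξ ^ (4 * k)) ^ ((3 : ℝ) / 2) := by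
  set F : Polynomial ℝ := ∑ i ∈ Finset.range (2 * k + 2), C (a i) * X ^ i with hF
  have hFeval : ∀ x : ℝ, F.eval x = f x := by
    intro x
    simp [hF, hf, eval_finset_sum]
  have hFfun : f = fun x => F.eval x := by funext x; rw [hFeval]
  have hFcoeff : F.coeff (2 * k + 1) = a (2 * k + 1) := by
    simp [hF, finset_sum_coeff, coeff_C_mul, coeff_X_pow]
  have hFdegle : F.natDegree ≤ 2 * k + 1 := by
    apply natDegree_sum_le_of_forall_le
    intro i hi
    apply le_trans (natDegree_mul_le)
    simp only [natDegree_C, natDegree_X_pow, zero_add]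
    have := Finset.mem_range.mp hi
    omega
  have hFdeg : F.natDegree = 2 * k + 1 := by
    refine le_antisymm hFdegle (le_natDegree_of_ne_zero ?_)
    rw [hFcoeff]; exact hlead.ne
  have hderiv : ∀ x : ℝ, deriv f x = F.derivative.eval x := by
    intro x
    rw [hFfun]
    exact Polynomial.deriv (𝕜 := ℝ) F
  -- P1 = F'
  have hP1coeff : F.derivative.coeff (2 * k) = a (2 * k + 1) * (2 * k + 1) := by
    rw [coeff_derivative, hFcoeff]; push_cast; ring
  have hP1ne : F.derivative.coeff (2 * k) ≠ 0 := by
    rw [hP1coeff]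
    have : (0:ℝ) < (2 * k + 1 : ℝ) := by positivity
    nlinarith
  have hP1deg : F.derivative.natDegree = 2 * k := by
    refine le_antisymm ?_ (le_natDegree_of_ne_zero hP1ne)
    have := natDegree_derivative_le F
    omega
  have hP1lead : F.derivative.leadingCoeff < 0 := by
    rw [leadingCoeff, hP1deg, hP1coeff]
    have : (0:ℝ) < (2 * k + 1 : ℝ) := by positivity
    nlinarith
  obtain ⟨M1, hM1⟩ := eval_bddAbove F.derivative (by omega) (by rw [hP1deg]; exact even_two_mul k) hP1lead
  -- H = 4k • F − X * F'
  set H : Polynomial ℝ := C ((4 : ℝ) * k) * F - X * F.derivative with hH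
  have hHcoeff : H.coeff (2 * k + 1) = ((2 * k : ℝ) - 1) * a (2 * k + 1) := by
    rw [hH]
    rw [coeff_sub, coeff_C_mul, hFcoeff, coeff_X_mul, hP1coeff]
    ring
  have hHc_neg : H.coeff (2 * k + 1) < 0 := by
    rw [hHcoeff]
    have h1 : (2:ℝ) ≤ (2 * k : ℝ) := by
      have : (2:ℕ) ≤ 2 * k := by omega
      exact_mod_cast this
    nlinarith
  have hHdeg : H.natDegree = 2 * k + 1 := by
    refine le_antisymm ?_ (le_natDegree_of_ne_zero hHc_neg.ne)
    apply le_trans (natDegree_sub_le _ _)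
    apply max_le
    · apply le_trans natDegree_mul_le; rw [natDegree_C, hFdeg]; omega
    · apply le_trans natDegree_mul_le; simp [hP1deg]; omega
  have hHne : H ≠ 0 := fun h => by simp [h] at hHc_neg
  set P2 : Polynomial ℝ := X ^ (4 * k - 1) * H with hP2
  have hP2deg : P2.natDegree = 6 * k := by
    rw [hP2, natDegree_mul (pow_ne_zero _ X_ne_zero) hHne, natDegree_X_pow, hHdeg]
    omega
  have hP2lead : P2.leadingCoeff < 0 := by
    rw [hP2, leadingCoeff_mul, (monic_X_pow _).leadingCoeff, one_mul, leadingCoeff, hHdeg]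
    exact hHc_neg
  obtain ⟨M2, hM2⟩ := eval_bddAbove P2 (by omega) (by rw [hP2deg]; exact ⟨3 * k, by omega⟩) hP2lead
  refine ⟨max (M1 + max M2 0) 1, lt_of_lt_of_le one_pos (le_max_right _ _), ?_⟩
  intro τ hτ hτ1 ξ
  have hP2eval : P2.eval ξ = ξ ^ (4 * k - 1) * ((4:ℝ) * k * f ξ - ξ * deriv f ξ) := by
    rw [hP2, eval_mul, eval_pow, eval_X, hH, eval_sub, eval_mul, eval_mul, eval_C, eval_X,
      hFeval, hderiv]
  have hpow : ξ ^ (4 * k) = ξ ^ (4 * k - 1) * ξ := by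
    rw [← pow_succ]
    congr 1
    omega
  have hLHS : (1 - τ * ξ ^ (4 * k)) * deriv f ξ +
      2 * (2 * k : ℝ) * τ * ξ ^ (4 * k - 1) * f ξ
      = F.derivative.eval ξ + τ * P2.eval ξ := by
    rw [hP2eval, hderiv, hpow]
    ring
  rw [hLHS]
  have hb1 : F.derivative.eval ξ ≤ M1 := hM1 ξ
  have hb2 : τ * P2.eval ξ ≤ max M2 0 := by
    have h1 : τ * P2.eval ξ ≤ τ * max M2 0 := by
      apply mul_le_mul_of_nonneg_left (le_trans (hM2 ξ) (le_max_left _ _)) hτ.le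
    have h2 : τ * max M2 0 ≤ 1 * max M2 0 :=
      mul_le_mul_of_nonneg_right hτ1 (le_max_right _ _)
    linarith
  have hrpow : (1:ℝ) ≤ (1 + τ * ξ ^ (4 * k)) ^ ((3 : ℝ) / 2) := by
    apply Real.one_le_rpow _ (by norm_num)
    have : 0 ≤ ξ ^ (4 * k) := by
      have : ξ ^ (4 * k) = (ξ ^ (2 * k)) ^ 2 := by rw [← pow_mul]; ring_nf
      rw [this]; positivity
    nlinarith
  calc F.derivative.eval ξ + τ * P2.eval ξ ≤ M1 + max M2 0 := by linarith
    _ ≤ max (M1 + max M2 0) 1 := le_max_left _ _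
    _ = max (M1 + max M2 0) 1 * 1 := (mul_one _).symm
    _ ≤ max (M1 + max M2 0) 1 * (1 + τ * ξ ^ (4 * k)) ^ ((3 : ℝ) / 2) := by
        apply mul_le_mul_of_nonneg_left hrpow
        exact le_trans zero_le_one (le_max_right _ _)
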